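/- Let G be a finite graph with simple random walk transition matrix M, let o be a fixed vertex, and let B be a random real matrix indexed by the vertices of G such that |B_{u,v}| \le c_1 M_{u,v} almost surely and the rows (B_{u,\cdot})_{u} are independent random vectors. For |\lambda| < 1 let \mathcal{G}_\lambda = (I - \lambda M)^{-1}. Define Y_j(G,v,w) = \sum_{j_1+j_2+2=j,\, j_1,j_2\ge 0} (BM^{j_1})_{v,w}(BM^{j_2})_{w,v} and \alpha_{ij} = E[\sum_{v \ne o} Y_i(G,o,v) Y_j(G,o,v)]. Then for all complex \lambda, \mu with |\lambda| < 1 and |\mu| < 1, \sum_{i,j \ge 2} \alpha_{ij} \lambda^i \mu^j = \lambda^2 \mu^2 \sum_{v \ne o} E[ (B\mathcal{G}_\lambda)_{o,v} (B\mathcal{G}_\mu)_{o,v} ] \cdot E[ (B\mathcal{G}_\lambda)_{v,o} (B\mathcal{G}_\mu)_{v,o} ], where the double series on the left converges absolutely. -/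

import Mathlib

open Matrix Finset MeasureTheory ProbabilityTheory

lemma pow_entry_nonneg' {V : Type*} [Fintype V] [DecidableEq V] (M : Matrix V V ℝ)
    (h0 : ∀ u v, 0 ≤ M u v) : ∀ (k : ℕ) (u v : V), 0 ≤ (M ^ k) u v := by
  intro k
  induction k with
  | zero =>
      intro u v
      rw [pow_zero, Matrix.one_apply]
      split <;> norm_num
  | succ k ih =>
      intro u v
      rw [pow_succ, Matrix.mul_apply]
      exact Finset.sum_nonneg fun w _ => mul_nonneg (ih u w) (h0 w v)

lemma pow_row_sum_le' {V : Type*} [Fintype V] [DecidableEq V] (M : Matrix V V ℝ)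
    (h0 : ∀ u v, 0 ≤ M u v) (h1 : ∀ u, ∑ v, M u v ≤ 1) :
    ∀ (k : ℕ) (u : V), ∑ v, (M ^ k) u v ≤ 1 := by
  intro k
  induction k with
  | zero => intro u; simp [Matrix.one_apply]
  | succ k ih =>
      intro u
      have h2 : ∑ v, (M ^ (k+1)) u v = ∑ w, (M ^ k) u w * ∑ v, M w v := by
        simp_rw [pow_succ, Matrix.mul_apply, Finset.mul_sum]
        rw [Finset.sum_comm]
      rw [h2]
      calc ∑ w, (M ^ k) u w * ∑ v, M w v ≤ ∑ w, (M ^ k) u w * 1 := by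
            refine Finset.sum_le_sum fun w _ => ?_
            exact mul_le_mul_of_nonneg_left (h1 w) (pow_entry_nonneg' M h0 k u w)
        _ ≤ 1 := by simpa using ih u

lemma pow_entry_le_one' {V : Type*} [Fintype V] [DecidableEq V] (M : Matrix V V ℝ)
    (h0 : ∀ u v, 0 ≤ M u v) (h1 : ∀ u, ∑ v, M u v ≤ 1) (k : ℕ) (u v : V) :
    (M ^ k) u v ≤ 1 :=
  le_trans (Finset.single_le_sum (fun w _ => pow_entry_nonneg' M h0 k u w)
    (Finset.mem_univ v)) (pow_row_sum_le' M h0 h1 k u)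

lemma green_hasSum' {V : Type*} [Fintype V] [DecidableEq V] (N : Matrix V V ℂ)
    (hN : ∀ (k : ℕ) (u v : V), ‖(N ^ k) u v‖ ≤ 1)
    (z : ℂ) (hz : ‖z‖ < 1) (u v : V) :
    HasSum (fun k : ℕ => z ^ k * (N ^ k) u v)
      (((1 : Matrix V V ℂ) - z • N)⁻¹ u v) := by
  have habs : ∀ u v : V, Summable fun k : ℕ => ‖z ^ k * (N ^ k) u v‖ := by
    intro u v
    refine Summable.of_nonneg_of_le (fun k => norm_nonneg _) (fun k => ?_)
      (summable_geometric_of_lt_one (norm_nonneg z) hz)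
    rw [norm_mul, norm_pow]
    calc ‖z‖ ^ k * ‖(N ^ k) u v‖
        ≤ ‖z‖ ^ k * 1 :=
          mul_le_mul_of_nonneg_left (hN k u v) (pow_nonneg (norm_nonneg z) k)
      _ = ‖z‖ ^ k := mul_one _
  have hsum : ∀ u v : V, Summable fun k : ℕ => z ^ k * (N ^ k) u v :=
    fun u v => (habs u v).of_norm
  set S : Matrix V V ℂ := Matrix.of fun u v => ∑' k : ℕ, z ^ k * (N ^ k) u v with hS
  have key : ((1 : Matrix V V ℂ) - z • N) * S = 1 := by
    ext u v
    rw [Matrix.mul_apply]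
    have hterm : ∀ w, ((1 : Matrix V V ℂ) - z • N) u w * S w v
        = (if u = w then S w v else 0) - z * N u w * S w v := by
      intro w
      by_cases h : u = w <;>
        simp [Matrix.sub_apply, Matrix.one_apply, Matrix.smul_apply, smul_eq_mul, h, sub_mul]
    simp_rw [hterm]
    rw [Finset.sum_sub_distrib, Finset.sum_ite_eq, if_pos (Finset.mem_univ u)]
    -- compute the second sum
    have h2 : ∀ w, HasSum (fun k : ℕ => z * N u w * (z ^ k * (N ^ k) w v)) (z * N u w * S w v) :=
      fun w => (hsum w v).hasSum.mul_left _
    have h3 : HasSum (fun k : ℕ => ∑ w, z * N u w * (z ^ k * (N ^ k) w v))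
        (∑ w, z * N u w * S w v) := hasSum_sum fun w _ => h2 w
    have heq : (fun k : ℕ => ∑ w, z * N u w * (z ^ k * (N ^ k) w v))
        = fun k : ℕ => z ^ (k+1) * (N ^ (k+1)) u v := by
      funext k
      rw [pow_succ' N k, Matrix.mul_apply, Finset.mul_sum]
      exact Finset.sum_congr rfl fun w _ => by ring
    rw [heq] at h3
    have h5 := Summable.tsum_eq_zero_add (hsum u v)
    have hSuv : S u v = ∑' k : ℕ, z ^ k * (N ^ k) u v := rfl
    rw [hSuv, h5, ← h3.tsum_eq]
    simp [Matrix.one_apply]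
  have hinv : ((1 : Matrix V V ℂ) - z • N)⁻¹ = S := Matrix.inv_eq_right_inv key
  rw [hinv]
  exact (hsum u v).hasSum




lemma hasSum_regroup' {T : ((ℕ × ℕ) × (ℕ × ℕ)) → ℂ} {a : ℂ} (hT : HasSum T a)
    {g : ℕ × ℕ → ℂ}
    (hg : ∀ p : ℕ × ℕ, g p =
      ∑ q ∈ ((Finset.range p.1 ×ˢ Finset.range p.2) ×ˢ
          (Finset.range p.1 ×ˢ Finset.range p.2)).filter
          (fun q => q.1.1 + q.2.1 + 2 = p.1 ∧ q.1.2 + q.2.2 + 2 = p.2), T q) :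
    HasSum g a := by
  classical
  set π : ((ℕ × ℕ) × (ℕ × ℕ)) → ℕ × ℕ :=
    fun q => (q.1.1 + q.2.1 + 2, q.1.2 + q.2.2 + 2) with hπ
  have hTe : HasSum (T ∘ (Equiv.sigmaFiberEquiv π)) a :=
    (Equiv.sigmaFiberEquiv π).hasSum_iff.mpr hT
  refine hTe.sigma fun p => ?_
  rw [hg p]
  set F : Finset ((ℕ × ℕ) × (ℕ × ℕ)) :=
    ((Finset.range p.1 ×ˢ Finset.range p.2) ×ˢ
        (Finset.range p.1 ×ˢ Finset.range p.2)).filter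
        (fun q => q.1.1 + q.2.1 + 2 = p.1 ∧ q.1.2 + q.2.2 + 2 = p.2) with hF
  have hzero : ∀ q ∉ F, Set.indicator {q | π q = p} T q = 0 := by
    intro q hq
    rw [Set.indicator_apply_eq_zero]
    intro hqp
    exact absurd (by
      simp only [hF, Finset.mem_filter, Finset.mem_product, Finset.mem_range]
      have h' : q.1.1 + q.2.1 + 2 = p.1 ∧ q.1.2 + q.2.2 + 2 = p.2 := by
        have := hqp
        simp only [Set.mem_setOf_eq, hπ, Prod.ext_iff] at this
        exact this
      omega) hq
  have h1 := hasSum_sum_of_ne_finset_zero (L := SummationFilter.unconditional _) hzero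
  have h2 : ∑ q ∈ F, Set.indicator {q | π q = p} T q = ∑ q ∈ F, T q := by
    refine Finset.sum_congr rfl fun q hq => ?_
    rw [Set.indicator_of_mem]
    simp only [hF, Finset.mem_filter] at hq
    simp only [Set.mem_setOf_eq, hπ, Prod.ext_iff]
    exact hq.2
  rw [h2] at h1
  exact hasSum_subtype_iff_indicator.mpr h1

/-- For a finite graph with walk matrix `M`, a random matrix `B` with
independent rows and `|B_{u,v}| ≤ c₁ M_{u,v}` a.s., and Green functions
`𝒢_λ = (I - λM)⁻¹`, the generating function of the coefficients `α_{ij}` factorizes: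
`∑_{i,j} α_{ij} λ^i μ^j = λ²μ² ∑_{v≠o} E[(B𝒢_λ)_{ov}(B𝒢_μ)_{ov}] E[(B𝒢_λ)_{vo}(B𝒢_μ)_{vo}]`,
the series on the left converging absolutely. -/
theorem alpha_generating_function_eq_green {V : Type*} [Fintype V] [DecidableEq V]
    (G : SimpleGraph V) [DecidableRel G.Adj] (o : V)
    (M : Matrix V V ℝ)
    (hM : ∀ u v : V, M u v = if G.Adj u v then (1 : ℝ) / (G.degree u) else 0)
    {Ω : Type*} [MeasurableSpace Ω] (μ : Measure Ω) [IsProbabilityMeasure μ]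
    (B : Ω → Matrix V V ℝ) (hBmeas : ∀ u v, Measurable fun ω => B ω u v)
    (c₁ : ℝ) (hc₁ : 0 < c₁)
    (hBbound : ∀ᵐ ω ∂μ, ∀ u v, |B ω u v| ≤ c₁ * M u v)
    (hrows : iIndepFun
      (fun u ω => fun v => B ω u v) μ)
    (Y : ℕ → V → V → Ω → ℝ)
    (hY : ∀ j v w ω, Y j v w ω =
      ∑ p ∈ (Finset.range j ×ˢ Finset.range j).filter (fun p => p.1 + p.2 + 2 = j),
        (B ω * M ^ p.1) v w * (B ω * M ^ p.2) w v)
    (α : ℕ → ℕ → ℝ)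
    (hα : ∀ i j, α i j = ∫ ω, ∑ v ∈ Finset.univ.erase o, Y i o v ω * Y j o v ω ∂μ)
    (lam mu : ℂ) (hlam : ‖lam‖ < 1) (hmu : ‖mu‖ < 1) :
    Summable (fun p : ℕ × ℕ =>
      ‖(α p.1 p.2 : ℂ) * lam ^ p.1 * mu ^ p.2‖) ∧
    (∑' p : ℕ × ℕ, (α p.1 p.2 : ℂ) * lam ^ p.1 * mu ^ p.2) =
      lam ^ 2 * mu ^ 2 *
        ∑ v ∈ Finset.univ.erase o,
          (∫ ω, ((B ω).map Complex.ofReal *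
                  ((1 : Matrix V V ℂ) - lam • M.map Complex.ofReal)⁻¹) o v *
                ((B ω).map Complex.ofReal *
                  ((1 : Matrix V V ℂ) - mu • M.map Complex.ofReal)⁻¹) o v ∂μ) *
          (∫ ω, ((B ω).map Complex.ofReal *
                  ((1 : Matrix V V ℂ) - lam • M.map Complex.ofReal)⁻¹) v o *
                ((B ω).map Complex.ofReal *
                  ((1 : Matrix V V ℂ) - mu • M.map Complex.ofReal)⁻¹) v o ∂μ) := by
  classical
  set Mc : Matrix V V ℂ := M.map Complex.ofReal with hMcdef
  -- basic facts about M
  have hM0 : ∀ u v, 0 ≤ M u v := by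
    intro u v
    rw [hM]
    split
    · positivity
    · exact le_refl 0
  have hMrow : ∀ u, ∑ v, M u v ≤ 1 := by
    intro u
    have h1 : ∑ v, M u v
        = ∑ v ∈ Finset.univ.filter (fun v => G.Adj u v), (1 : ℝ) / (G.degree u) := by
      rw [Finset.sum_filter]
      refine Finset.sum_congr rfl fun v _ => ?_
      rw [hM]
    rw [h1, Finset.sum_const, nsmul_eq_mul]
    have hcard : (Finset.univ.filter (fun v => G.Adj u v)).card = G.degree u := by
      rw [← SimpleGraph.neighborFinset_eq_filter]
      rfl
    rw [hcard]
    rcases Nat.eq_zero_or_pos (G.degree u) with h | h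
    · simp [h]
    · have hne : (G.degree u : ℝ) ≠ 0 := Nat.cast_ne_zero.mpr h.ne'
      rw [mul_one_div, div_self hne]
  have hMk0 := pow_entry_nonneg' M hM0
  have hMk1 := pow_entry_le_one' M hM0 hMrow
  -- powers of Mc
  have hMcpow : ∀ k : ℕ, Mc ^ k = (M ^ k).map Complex.ofReal := by
    intro k
    have h1 : Mc = (Complex.ofRealHom.mapMatrix : Matrix V V ℝ →+* Matrix V V ℂ) M := rfl
    rw [h1, ← map_pow]
    rfl
  have hMcentry : ∀ (k : ℕ) (w v : V), (Mc ^ k) w v = (((M ^ k) w v : ℝ) : ℂ) := by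
    intro k w v
    rw [hMcpow k]
    rfl
  have hMcabs : ∀ (k : ℕ) (u v : V), ‖(Mc ^ k) u v‖ ≤ 1 := by
    intro k u v
    rw [hMcentry, Complex.norm_real, Real.norm_eq_abs, abs_of_nonneg (hMk0 k u v)]
    exact hMk1 k u v
  -- random entries of B * M^k
  set F : ℕ → V → V → Ω → ℝ := fun k u v ω => (B ω * M ^ k) u v with hFdef
  have hFmeas : ∀ k u v, Measurable (F k u v) := by
    intro k u v
    simp only [hFdef, Matrix.mul_apply]
    exact Finset.measurable_sum _ fun w _ => (hBmeas u w).mul_const _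
  have hFbd : ∀ᵐ ω ∂μ, ∀ (k : ℕ) (u v : V), |F k u v ω| ≤ c₁ := by
    filter_upwards [hBbound] with ω hω
    intro k u v
    have h1 : |F k u v ω| ≤ ∑ w, c₁ * M u w * (M ^ k) w v := by
      simp only [hFdef, Matrix.mul_apply]
      refine (Finset.abs_sum_le_sum_abs _ _).trans ?_
      refine Finset.sum_le_sum fun w _ => ?_
      rw [abs_mul, abs_of_nonneg (hMk0 k w v)]
      exact mul_le_mul_of_nonneg_right (hω u w) (hMk0 k w v)
    have h2 : ∑ w, c₁ * M u w * (M ^ k) w v = c₁ * (M ^ (k+1)) u v := by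
      rw [pow_succ' M k, Matrix.mul_apply, Finset.mul_sum]
      exact Finset.sum_congr rfl fun w _ => by ring
    calc |F k u v ω| ≤ c₁ * (M ^ (k+1)) u v := by rw [← h2]; exact h1
      _ ≤ c₁ * 1 := mul_le_mul_of_nonneg_left (hMk1 _ _ _) hc₁.le
      _ = c₁ := mul_one c₁
  -- integrability helper
  have hint : ∀ (f : Ω → ℝ) (C : ℝ), Measurable f → (∀ᵐ ω ∂μ, |f ω| ≤ C) → Integrable f μ := by
    intro f C hm hb
    refine (integrable_const C).mono' hm.aestronglyMeasurable ?_
    filter_upwards [hb] with ω h using by rwa [Real.norm_eq_abs]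
  -- second moment coefficients
  set Acc : V → V → ℕ → ℕ → ℝ := fun u v i j => ∫ ω, F i u v ω * F j u v ω ∂μ with hAccdef
  have hAccbd : ∀ u v i j, |Acc u v i j| ≤ c₁ * c₁ := by
    intro u v i j
    have hb : ∀ᵐ ω ∂μ, ‖F i u v ω * F j u v ω‖ ≤ c₁ * c₁ := by
      filter_upwards [hFbd] with ω h
      rw [Real.norm_eq_abs, abs_mul]
      exact mul_le_mul (h i u v) (h j u v) (abs_nonneg _) hc₁.le
    have := norm_integral_le_of_norm_le_const (μ := μ) hb
    simpa [Real.norm_eq_abs, measure_univ] using this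
  -- independence step
  have hiv : ∀ v : V, v ≠ o → ∀ i1 j1 i2 j2 : ℕ,
      ∫ ω, (F i1 o v ω * F j1 o v ω) * (F i2 v o ω * F j2 v o ω) ∂μ
        = Acc o v i1 j1 * Acc v o i2 j2 := by
    intro v hv i1 j1 i2 j2
    set g1 : (V → ℝ) → ℝ :=
      fun r => (∑ w, r w * (M ^ i1) w v) * (∑ w, r w * (M ^ j1) w v) with hg1
    set g2 : (V → ℝ) → ℝ :=
      fun r => (∑ w, r w * (M ^ i2) w o) * (∑ w, r w * (M ^ j2) w o) with hg2
    have hg1m : Measurable g1 :=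
      (Finset.measurable_sum _ fun w _ => (measurable_pi_apply w).mul_const _).mul
        (Finset.measurable_sum _ fun w _ => (measurable_pi_apply w).mul_const _)
    have hg2m : Measurable g2 :=
      (Finset.measurable_sum _ fun w _ => (measurable_pi_apply w).mul_const _).mul
        (Finset.measurable_sum _ fun w _ => (measurable_pi_apply w).mul_const _)
    have hio : IndepFun (fun ω => (fun w => B ω o w)) (fun ω => (fun w => B ω v w)) μ :=
      hrows.indepFun (Ne.symm hv)
    have hcomp : IndepFun (g1 ∘ fun ω => (fun w => B ω o w))
        (g2 ∘ fun ω => (fun w => B ω v w)) μ := hio.comp hg1m hg2m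
    have hX : (g1 ∘ fun ω => (fun w => B ω o w)) = fun ω => F i1 o v ω * F j1 o v ω := by
      funext ω
      simp only [Function.comp_apply, hg1, hFdef, Matrix.mul_apply]
    have hYf : (g2 ∘ fun ω => (fun w => B ω v w)) = fun ω => F i2 v o ω * F j2 v o ω := by
      funext ω
      simp only [Function.comp_apply, hg2, hFdef, Matrix.mul_apply]
    rw [hX, hYf] at hcomp
    have hXm : AEStronglyMeasurable (fun ω => F i1 o v ω * F j1 o v ω) μ :=
      ((hFmeas i1 o v).mul (hFmeas j1 o v)).aestronglyMeasurable
    have hYm : AEStronglyMeasurable (fun ω => F i2 v o ω * F j2 v o ω) μ :=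
      ((hFmeas i2 v o).mul (hFmeas j2 v o)).aestronglyMeasurable
    have key := hcomp.integral_fun_mul_eq_mul_integral hXm hYm
    simpa using key
  -- the finite index sets
  set Fi : ℕ → Finset (ℕ × ℕ) :=
    fun i => (Finset.range i ×ˢ Finset.range i).filter (fun p => p.1 + p.2 + 2 = i) with hFidef
  have hYmeas : ∀ i u v, Measurable fun ω => Y i u v ω := by
    intro i u v
    have h1 : (fun ω => Y i u v ω) = fun ω => ∑ p ∈ Fi i, F p.1 u v ω * F p.2 v u ω := by
      funext ω
      rw [hY]
    rw [h1]
    exact Finset.measurable_sum _ fun p _ => (hFmeas _ _ _).mul (hFmeas _ _ _)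
  have hYbd : ∀ᵐ ω ∂μ, ∀ (i : ℕ) (u v : V), |Y i u v ω| ≤ (Fi i).card * (c₁ * c₁) := by
    filter_upwards [hFbd] with ω h
    intro i u v
    rw [hY]
    refine (Finset.abs_sum_le_sum_abs _ _).trans ?_
    have hterm : ∀ p ∈ Fi i, |(B ω * M ^ p.1) u v * (B ω * M ^ p.2) v u| ≤ c₁ * c₁ := by
      intro p _
      rw [abs_mul]
      exact mul_le_mul (h p.1 u v) (h p.2 v u) (abs_nonneg _) hc₁.le
    calc ∑ p ∈ Fi i, |(B ω * M ^ p.1) u v * (B ω * M ^ p.2) v u|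
        ≤ (Fi i).card • (c₁ * c₁) := Finset.sum_le_card_nsmul _ _ _ hterm
      _ = (Fi i).card * (c₁ * c₁) := nsmul_eq_mul _ _
  have hprod4int : ∀ (i1 j1 i2 j2 : ℕ) (v : V),
      Integrable (fun ω => (F i1 o v ω * F j1 o v ω) * (F i2 v o ω * F j2 v o ω)) μ := by
    intro i1 j1 i2 j2 v
    refine hint _ ((c₁ * c₁) * (c₁ * c₁))
      (((hFmeas _ _ _).mul (hFmeas _ _ _)).mul ((hFmeas _ _ _).mul (hFmeas _ _ _))) ?_
    filter_upwards [hFbd] with ω h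
    rw [abs_mul, abs_mul, abs_mul]
    have h1 : |F i1 o v ω| * |F j1 o v ω| ≤ c₁ * c₁ :=
      mul_le_mul (h _ _ _) (h _ _ _) (abs_nonneg _) hc₁.le
    have h2 : |F i2 v o ω| * |F j2 v o ω| ≤ c₁ * c₁ :=
      mul_le_mul (h _ _ _) (h _ _ _) (abs_nonneg _) hc₁.le
    exact mul_le_mul h1 h2 (mul_nonneg (abs_nonneg _) (abs_nonneg _))
      (mul_nonneg hc₁.le hc₁.le)
  have hαf : ∀ i j, α i j = ∑ v ∈ Finset.univ.erase o, ∑ r ∈ Fi i, ∑ s ∈ Fi j,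
      Acc o v r.1 s.1 * Acc v o r.2 s.2 := by
    intro i j
    rw [hα]
    rw [integral_finset_sum _ (fun v _ => hint (fun ω => Y i o v ω * Y j o v ω) (((Fi i).card * (c₁ * c₁)) * ((Fi j).card * (c₁ * c₁)))
      ((hYmeas i o v).mul (hYmeas j o v)) ?_)]
    swap
    · filter_upwards [hYbd] with ω h
      rw [abs_mul]
      refine mul_le_mul (h i o v) (h j o v) (abs_nonneg _) ?_
      positivity
    refine Finset.sum_congr rfl fun v hv => ?_
    have hvne : v ≠ o := (Finset.mem_erase.mp hv).1
    have hYexp : ∀ ω, Y i o v ω * Y j o v ω =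
        ∑ r ∈ Fi i, ∑ s ∈ Fi j, (F r.1 o v ω * F s.1 o v ω) * (F r.2 v o ω * F s.2 v o ω) := by
      intro ω
      rw [hY, hY, Finset.sum_mul_sum]
      refine Finset.sum_congr rfl fun r _ => Finset.sum_congr rfl fun s _ => ?_
      show (F r.1 o v ω * F r.2 v o ω) * (F s.1 o v ω * F s.2 v o ω) = _
      ring
    calc ∫ ω, Y i o v ω * Y j o v ω ∂μ
        = ∫ ω, ∑ r ∈ Fi i, ∑ s ∈ Fi j,
            (F r.1 o v ω * F s.1 o v ω) * (F r.2 v o ω * F s.2 v o ω) ∂μ := by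
          exact integral_congr_ae (Filter.Eventually.of_forall hYexp)
      _ = ∑ r ∈ Fi i, ∑ s ∈ Fi j, Acc o v r.1 s.1 * Acc v o r.2 s.2 := by
          rw [integral_finset_sum _ (fun r _ => integrable_finset_sum _
            (fun s _ => hprod4int r.1 s.1 r.2 s.2 v))]
          refine Finset.sum_congr rfl fun r _ => ?_
          rw [integral_finset_sum _ (fun s _ => hprod4int r.1 s.1 r.2 s.2 v)]
          exact Finset.sum_congr rfl fun s _ => hiv v hvne r.1 s.1 r.2 s.2
  -- Green function entrywise expansion
  have hGreenMc : ∀ (z : ℂ), ‖z‖ < 1 → ∀ u v : V,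
      HasSum (fun k : ℕ => z ^ k * (Mc ^ k) u v)
        (((1 : Matrix V V ℂ) - z • Mc)⁻¹ u v) :=
    fun z hz u v => green_hasSum' Mc hMcabs z hz u v
  have hBGreen : ∀ (ω : Ω) (z : ℂ), ‖z‖ < 1 → ∀ u v : V,
      HasSum (fun k : ℕ => z ^ k * ((F k u v ω : ℝ) : ℂ))
        (((B ω).map Complex.ofReal * ((1 : Matrix V V ℂ) - z • Mc)⁻¹) u v) := by
    intro ω z hz u v
    have h1 : ∀ w : V, HasSum (fun k : ℕ => ((B ω u w : ℝ) : ℂ) * (z ^ k * (Mc ^ k) w v))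
        (((B ω u w : ℝ) : ℂ) * (((1 : Matrix V V ℂ) - z • Mc)⁻¹ w v)) :=
      fun w => (hGreenMc z hz w v).mul_left _
    have h2 : HasSum (fun k : ℕ => ∑ w, ((B ω u w : ℝ) : ℂ) * (z ^ k * (Mc ^ k) w v))
        (∑ w, ((B ω u w : ℝ) : ℂ) * (((1 : Matrix V V ℂ) - z • Mc)⁻¹ w v)) :=
      hasSum_sum fun w _ => h1 w
    have h3 : ∀ k : ℕ, ∑ w, ((B ω u w : ℝ) : ℂ) * (z ^ k * (Mc ^ k) w v)
        = z ^ k * ((F k u v ω : ℝ) : ℂ) := by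
      intro k
      have h4 : ((F k u v ω : ℝ) : ℂ) = ∑ w, ((B ω u w : ℝ) : ℂ) * (Mc ^ k) w v := by
        show (((B ω * M ^ k) u v : ℝ) : ℂ) = _
        rw [Matrix.mul_apply]
        push_cast
        exact Finset.sum_congr rfl fun w _ => by rw [hMcentry]
      rw [h4, Finset.mul_sum]
      exact Finset.sum_congr rfl fun w _ => by ring
    have h5 : (((B ω).map Complex.ofReal * ((1 : Matrix V V ℂ) - z • Mc)⁻¹) u v)
        = ∑ w, ((B ω u w : ℝ) : ℂ) * (((1 : Matrix V V ℂ) - z • Mc)⁻¹ w v) := by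
      rw [Matrix.mul_apply]
      rfl
    rw [h5]
    simpa only [h3] using h2
  -- summability constants
  have hlam0 : (0 : ℝ) ≤ ‖lam‖ := norm_nonneg lam
  have hmu0 : (0 : ℝ) ≤ ‖mu‖ := norm_nonneg mu
  have hgeom2 : Summable fun p : ℕ × ℕ => ‖lam‖ ^ p.1 * ‖mu‖ ^ p.2 :=
    (summable_geometric_of_lt_one hlam0 hlam).mul_of_nonneg
      (summable_geometric_of_lt_one hmu0 hmu)
      (fun i => pow_nonneg hlam0 i) (fun j => pow_nonneg hmu0 j)
  -- the key integral identity
  have hPQ : ∀ u v : V,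
      HasSum (fun p : ℕ × ℕ => lam ^ p.1 * mu ^ p.2 * ((Acc u v p.1 p.2 : ℝ) : ℂ))
        (∫ ω, ((B ω).map Complex.ofReal * ((1 : Matrix V V ℂ) - lam • Mc)⁻¹) u v *
              ((B ω).map Complex.ofReal * ((1 : Matrix V V ℂ) - mu • Mc)⁻¹) u v ∂μ) := by
    intro u v
    set h : ℕ × ℕ → Ω → ℂ := fun p ω =>
      (lam ^ p.1 * ((F p.1 u v ω : ℝ) : ℂ)) * (mu ^ p.2 * ((F p.2 u v ω : ℝ) : ℂ)) with hh
    have hform : ∀ p : ℕ × ℕ, h p = fun ω =>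
        (lam ^ p.1 * mu ^ p.2) * ((F p.1 u v ω * F p.2 u v ω : ℝ) : ℂ) := by
      intro p
      funext ω
      simp only [hh]
      push_cast
      ring
    have hintg : ∀ p : ℕ × ℕ, Integrable (h p) μ := by
      intro p
      rw [hform p]
      exact (Integrable.ofReal (hint (fun ω => F p.1 u v ω * F p.2 u v ω) (c₁ * c₁) ((hFmeas _ _ _).mul (hFmeas _ _ _)) (by
        filter_upwards [hFbd] with ω hb
        rw [abs_mul]
        exact mul_le_mul (hb _ _ _) (hb _ _ _) (abs_nonneg _) hc₁.le))).const_mul _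
    have hnormint : ∀ p : ℕ × ℕ, ∫ ω, ‖h p ω‖ ∂μ
        ≤ (‖lam‖ ^ p.1 * ‖mu‖ ^ p.2) * (c₁ * c₁) := by
      intro p
      calc ∫ ω, ‖h p ω‖ ∂μ
          ≤ ∫ _ω, (‖lam‖ ^ p.1 * ‖mu‖ ^ p.2) * (c₁ * c₁) ∂μ := by
            refine integral_mono_ae (hintg p).norm (integrable_const _) ?_
            filter_upwards [hFbd] with ω hb
            rw [hform p]
            simp only [norm_mul, Complex.norm_real, Real.norm_eq_abs, norm_pow]
            have h1 : |F p.1 u v ω * F p.2 u v ω| ≤ c₁ * c₁ := by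
              rw [abs_mul]
              exact mul_le_mul (hb _ _ _) (hb _ _ _) (abs_nonneg _) hc₁.le
            have h2 : (0 : ℝ) ≤ ‖lam‖ ^ p.1 * ‖mu‖ ^ p.2 := by positivity
            exact mul_le_mul_of_nonneg_left (by rwa [abs_mul] at h1) h2
        _ = (‖lam‖ ^ p.1 * ‖mu‖ ^ p.2) * (c₁ * c₁) := by
            simp [measure_univ]
    have hsummable : Summable fun p : ℕ × ℕ => ∫ ω, ‖h p ω‖ ∂μ := by
      refine Summable.of_nonneg_of_le (fun p => integral_nonneg fun ω => norm_nonneg _)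
        hnormint (hgeom2.mul_right (c₁ * c₁))
    have hHasSum := hasSum_integral_of_summable_integral_norm hintg hsummable
    have hIp : ∀ p : ℕ × ℕ, (∫ ω, h p ω ∂μ)
        = lam ^ p.1 * mu ^ p.2 * ((Acc u v p.1 p.2 : ℝ) : ℂ) := by
      intro p
      rw [hform p, integral_const_mul]
      congr 1
      rw [hAccdef]
      exact integral_ofReal
    have hae : (∫ ω, ∑' p : ℕ × ℕ, h p ω ∂μ)
        = ∫ ω, ((B ω).map Complex.ofReal * ((1 : Matrix V V ℂ) - lam • Mc)⁻¹) u v *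
              ((B ω).map Complex.ofReal * ((1 : Matrix V V ℂ) - mu • Mc)⁻¹) u v ∂μ := by
      refine integral_congr_ae ?_
      filter_upwards [hFbd] with ω hb
      have hgl := hBGreen ω lam hlam u v
      have hgm := hBGreen ω mu hmu u v
      have hnl : Summable fun k : ℕ => ‖lam ^ k * ((F k u v ω : ℝ) : ℂ)‖ := by
        refine Summable.of_nonneg_of_le (fun k => norm_nonneg _) (fun k => ?_)
          ((summable_geometric_of_lt_one hlam0 hlam).mul_right c₁)
        rw [norm_mul, norm_pow, Complex.norm_real, Real.norm_eq_abs]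
        exact mul_le_mul_of_nonneg_left (hb _ _ _) (pow_nonneg hlam0 k)
      have hnm : Summable fun k : ℕ => ‖mu ^ k * ((F k u v ω : ℝ) : ℂ)‖ := by
        refine Summable.of_nonneg_of_le (fun k => norm_nonneg _) (fun k => ?_)
          ((summable_geometric_of_lt_one hmu0 hmu).mul_right c₁)
        rw [norm_mul, norm_pow, Complex.norm_real, Real.norm_eq_abs]
        exact mul_le_mul_of_nonneg_left (hb _ _ _) (pow_nonneg hmu0 k)
      calc (∑' p : ℕ × ℕ, h p ω)
          = (∑' k : ℕ, lam ^ k * ((F k u v ω : ℝ) : ℂ))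
            * (∑' k : ℕ, mu ^ k * ((F k u v ω : ℝ) : ℂ)) := by
            rw [tsum_mul_tsum_of_summable_norm hnl hnm]
        _ = _ := by rw [hgl.tsum_eq, hgm.tsum_eq]
    rw [hae] at hHasSum
    simpa only [hIp] using hHasSum
  -- summability of the coefficient families
  have hnormAcc : ∀ (u v : V), Summable fun p : ℕ × ℕ =>
      ‖lam ^ p.1 * mu ^ p.2 * ((Acc u v p.1 p.2 : ℝ) : ℂ)‖ := by
    intro u v
    refine Summable.of_nonneg_of_le (fun p => norm_nonneg _) (fun p => ?_)
      (hgeom2.mul_right (c₁ * c₁))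
    rw [norm_mul, norm_mul, norm_pow, norm_pow,
      Complex.norm_real, Real.norm_eq_abs]
    exact mul_le_mul_of_nonneg_left (hAccbd u v p.1 p.2) (by positivity)
  -- main per-vertex HasSum
  have hmain : ∀ v ∈ Finset.univ.erase o,
      HasSum (fun p : ℕ × ℕ =>
        ((∑ r ∈ Fi p.1, ∑ s ∈ Fi p.2, Acc o v r.1 s.1 * Acc v o r.2 s.2 : ℝ) : ℂ)
          * lam ^ p.1 * mu ^ p.2)
        (lam ^ 2 * mu ^ 2 *
          ((∫ ω, ((B ω).map Complex.ofReal * ((1 : Matrix V V ℂ) - lam • Mc)⁻¹) o v *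
                ((B ω).map Complex.ofReal * ((1 : Matrix V V ℂ) - mu • Mc)⁻¹) o v ∂μ) *
           (∫ ω, ((B ω).map Complex.ofReal * ((1 : Matrix V V ℂ) - lam • Mc)⁻¹) v o *
                ((B ω).map Complex.ofReal * ((1 : Matrix V V ℂ) - mu • Mc)⁻¹) v o ∂μ))) := by
    intro v _
    have hP := hPQ o v
    have hQ := hPQ v o
    have hprodsum := summable_mul_of_summable_norm (hnormAcc o v) (hnormAcc v o)
    have hT : HasSum (fun q : (ℕ × ℕ) × (ℕ × ℕ) =>
        (lam ^ q.1.1 * mu ^ q.1.2 * ((Acc o v q.1.1 q.1.2 : ℝ) : ℂ))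
        * (lam ^ q.2.1 * mu ^ q.2.2 * ((Acc v o q.2.1 q.2.2 : ℝ) : ℂ)))
        ((∫ ω, ((B ω).map Complex.ofReal * ((1 : Matrix V V ℂ) - lam • Mc)⁻¹) o v *
              ((B ω).map Complex.ofReal * ((1 : Matrix V V ℂ) - mu • Mc)⁻¹) o v ∂μ) *
         (∫ ω, ((B ω).map Complex.ofReal * ((1 : Matrix V V ℂ) - lam • Mc)⁻¹) v o *
              ((B ω).map Complex.ofReal * ((1 : Matrix V V ℂ) - mu • Mc)⁻¹) v o ∂μ)) := by
      have heq := tsum_mul_tsum_of_summable_norm (hnormAcc o v) (hnormAcc v o)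
      rw [hP.tsum_eq, hQ.tsum_eq] at heq
      exact heq ▸ hprodsum.hasSum
    have hT2 := hT.mul_left (lam ^ 2 * mu ^ 2)
    refine hasSum_regroup' hT2 ?_
    intro p
    rw [eq_comm]
    have step1 : ∀ q ∈ ((Finset.range p.1 ×ˢ Finset.range p.2) ×ˢ
        (Finset.range p.1 ×ˢ Finset.range p.2)).filter
        (fun q => q.1.1 + q.2.1 + 2 = p.1 ∧ q.1.2 + q.2.2 + 2 = p.2),
        lam ^ 2 * mu ^ 2 * ((lam ^ q.1.1 * mu ^ q.1.2 * ((Acc o v q.1.1 q.1.2 : ℝ) : ℂ))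
          * (lam ^ q.2.1 * mu ^ q.2.2 * ((Acc v o q.2.1 q.2.2 : ℝ) : ℂ)))
        = ((Acc o v q.1.1 q.1.2 : ℝ) : ℂ) * ((Acc v o q.2.1 q.2.2 : ℝ) : ℂ)
            * lam ^ p.1 * mu ^ p.2 := by
      intro q hq
      simp only [Finset.mem_filter] at hq
      obtain ⟨-, h1, h2⟩ := hq
      rw [← h1, ← h2]
      ring
    calc ∑ q ∈ ((Finset.range p.1 ×ˢ Finset.range p.2) ×ˢ
          (Finset.range p.1 ×ˢ Finset.range p.2)).filter
          (fun q => q.1.1 + q.2.1 + 2 = p.1 ∧ q.1.2 + q.2.2 + 2 = p.2),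
          lam ^ 2 * mu ^ 2 * ((lam ^ q.1.1 * mu ^ q.1.2 * ((Acc o v q.1.1 q.1.2 : ℝ) : ℂ))
            * (lam ^ q.2.1 * mu ^ q.2.2 * ((Acc v o q.2.1 q.2.2 : ℝ) : ℂ)))
        = ∑ q ∈ ((Finset.range p.1 ×ˢ Finset.range p.2) ×ˢ
            (Finset.range p.1 ×ˢ Finset.range p.2)).filter
            (fun q => q.1.1 + q.2.1 + 2 = p.1 ∧ q.1.2 + q.2.2 + 2 = p.2),
            ((Acc o v q.1.1 q.1.2 : ℝ) : ℂ) * ((Acc v o q.2.1 q.2.2 : ℝ) : ℂ)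
              * lam ^ p.1 * mu ^ p.2 := Finset.sum_congr rfl step1
      _ = (∑ q ∈ ((Finset.range p.1 ×ˢ Finset.range p.2) ×ˢ
            (Finset.range p.1 ×ˢ Finset.range p.2)).filter
            (fun q => q.1.1 + q.2.1 + 2 = p.1 ∧ q.1.2 + q.2.2 + 2 = p.2),
            ((Acc o v q.1.1 q.1.2 : ℝ) : ℂ) * ((Acc v o q.2.1 q.2.2 : ℝ) : ℂ))
              * lam ^ p.1 * mu ^ p.2 := by
          rw [← Finset.sum_mul, ← Finset.sum_mul]
      _ = ((∑ r ∈ Fi p.1, ∑ s ∈ Fi p.2, Acc o v r.1 s.1 * Acc v o r.2 s.2 : ℝ) : ℂ)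
            * lam ^ p.1 * mu ^ p.2 := by
          congr 2
          push_cast
          rw [← Finset.sum_product']
          refine Finset.sum_nbij'
            (fun (q : (ℕ × ℕ) × (ℕ × ℕ)) => ((q.1.1, q.2.1), (q.1.2, q.2.2)))
            (fun (x : (ℕ × ℕ) × (ℕ × ℕ)) => ((x.1.1, x.2.1), (x.1.2, x.2.2)))
            ?_ ?_ ?_ ?_ ?_
          · intro a ha
            simp only [hFidef, Finset.mem_filter, Finset.mem_product, Finset.mem_range] at ha ⊢
            omega
          · intro a ha
            simp only [hFidef, Finset.mem_filter, Finset.mem_product, Finset.mem_range] at ha ⊢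
            omega
          · intro a _
            rfl
          · intro a _
            rfl
          · intro a _
            rfl
  have htotal := hasSum_sum hmain
  have hfeq : (fun p : ℕ × ℕ => ((α p.1 p.2 : ℝ) : ℂ) * lam ^ p.1 * mu ^ p.2)
      = fun p : ℕ × ℕ => ∑ v ∈ Finset.univ.erase o,
          ((∑ r ∈ Fi p.1, ∑ s ∈ Fi p.2, Acc o v r.1 s.1 * Acc v o r.2 s.2 : ℝ) : ℂ)
            * lam ^ p.1 * mu ^ p.2 := by
    funext p
    rw [hαf p.1 p.2]
    push_cast
    rw [Finset.sum_mul, Finset.sum_mul]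
  have hfinal : HasSum (fun p : ℕ × ℕ => ((α p.1 p.2 : ℝ) : ℂ) * lam ^ p.1 * mu ^ p.2)
      (lam ^ 2 * mu ^ 2 * ∑ v ∈ Finset.univ.erase o,
        ((∫ ω, ((B ω).map Complex.ofReal * ((1 : Matrix V V ℂ) - lam • Mc)⁻¹) o v *
              ((B ω).map Complex.ofReal * ((1 : Matrix V V ℂ) - mu • Mc)⁻¹) o v ∂μ) *
         (∫ ω, ((B ω).map Complex.ofReal * ((1 : Matrix V V ℂ) - lam • Mc)⁻¹) v o *
              ((B ω).map Complex.ofReal * ((1 : Matrix V V ℂ) - mu • Mc)⁻¹) v o ∂μ))) := by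
    rw [hfeq, Finset.mul_sum]
    exact htotal
  refine ⟨?_, ?_⟩
  · have := summable_norm_iff.mpr hfinal.summable
    exact this
  · exact hfinal.tsum_eq
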